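/- Let G be a k-regular graph on n vertices with at least one edge, with smallest adjacency eigenvalue −τ. If α(G) = nτ/(k+τ) and χ(G) = n/α(G), then in any proper χ(G)-coloring with all classes of size α(G), every two color classes induce a τ-regular bipartite subgraph. -/

import Mathlib

open Matrix SimpleGraph

noncomputable def minEigR {n : ℕ} (A : Matrix (Fin n) (Fin n) ℝ) : ℝ :=
  sInf (spectrum ℝ A)

/-- Equality case in Hoffman's ratio bound: for a `k`-regular graph with
`α(G) = nτ/(k+τ)` and `χ(G) = n/α(G)`, in any proper `χ(G)`-coloring whose
classes all have size `α(G)`, every two color classes induce a `τ`-regular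
bipartite subgraph. -/
theorem stmt19 {n k r α : ℕ} (G : SimpleGraph (Fin n)) [DecidableRel G.Adj]
    (hedge : ∃ u v, G.Adj u v) (hreg : G.IsRegularOfDegree k)
    (τ : ℝ) (hτ : minEigR (G.adjMatrix ℝ) = -τ) (hτpos : 0 < τ)
    (hα : ∀ s : Finset (Fin n), (∀ u ∈ s, ∀ v ∈ s, ¬ G.Adj u v) → s.card ≤ α)
    (hαex : ∃ s : Finset (Fin n), (∀ u ∈ s, ∀ v ∈ s, ¬ G.Adj u v) ∧ s.card = α)
    (hαval : (α : ℝ) = (n : ℝ) * τ / ((k : ℝ) + τ))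
    (hχ : G.chromaticNumber = (r : ℕ∞)) (hrα : r * α = n)
    (C : G.Coloring (Fin r))
    (hsizes : ∀ c : Fin r, (Finset.univ.filter fun v => C v = c).card = α) :
    ∀ c c' : Fin r, c ≠ c' → ∀ v : Fin n, C v = c →
      ((Finset.univ.filter fun w => C w = c' ∧ G.Adj v w).card : ℝ) = τ := by
  classical
  intro c c' hcc v hv
  have hn : 0 < n := Fin.pos v
  have hnR : (0:ℝ) < n := by exact_mod_cast hn
  have hkτ : (0:ℝ) < (k:ℝ) + τ := by positivity
  have hkey : ((k:ℝ) + τ) * α = (n:ℝ) * τ := by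
    field_simp at hαval; linarith
  set A : Matrix (Fin n) (Fin n) ℝ := G.adjMatrix ℝ with hAdef
  have hHerm : A.IsHermitian := by
    rw [Matrix.IsHermitian, conjTranspose_eq_transpose_of_trivial, hAdef, transpose_adjMatrix]
  set B : Matrix (Fin n) (Fin n) ℝ := (algebraMap ℝ (Matrix (Fin n) (Fin n) ℝ)) τ + A with hBdef
  have hBH : B.IsHermitian := by
    refine Matrix.IsHermitian.add ?_ hHerm
    rw [Matrix.IsHermitian, conjTranspose_eq_transpose_of_trivial, Algebra.algebraMap_eq_smul_one,
      transpose_smul, transpose_one]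
  -- every element of the spectrum of A is ≥ -τ
  have hspec : ∀ μ ∈ spectrum ℝ A, -τ ≤ μ := by
    intro μ hμ
    rw [← hτ]
    exact csInf_le (A.finite_spectrum.bddBelow) hμ
  have hPSD : B.PosSemidef := by
    refine hBH.posSemidef_iff_eigenvalues_nonneg.mpr fun i => (?_ : (0:ℝ) ≤ hBH.eigenvalues i)
    have hmem : hBH.eigenvalues i ∈ spectrum ℝ B := hBH.eigenvalues_mem_spectrum_real i
    set μ := hBH.eigenvalues i
    have h1 : (μ - τ) + τ ∈ spectrum ℝ B := by rwa [sub_add_cancel]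
    have h2 : μ - τ ∈ spectrum ℝ A := (spectrum.add_mem_add_iff).mp h1
    have := hspec _ h2
    linarith
  -- the test vector
  set cst : ℝ := (α : ℝ) / n with hcst
  set x : Fin n → ℝ := fun w => if C w = c' then (1:ℝ) else 0 with hxdef
  set z : Fin n → ℝ := fun w => x w - cst with hzdef
  -- basic sums
  have hsumx : ∑ w : Fin n, x w = (α : ℝ) := by
    rw [hxdef]
    rw [Finset.sum_boole]
    exact_mod_cast congrArg Nat.cast (hsizes c')
  have hdeg : ∀ i : Fin n, ((Finset.univ.filter (G.Adj i)).card : ℝ) = (k : ℝ) := by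
    intro i
    rw [← neighborFinset_eq_filter]
    exact_mod_cast congrArg Nat.cast (hreg i)
  have hrow : ∀ i : Fin n, ∑ j : Fin n, (if G.Adj i j then (1:ℝ) else 0) = (k : ℝ) := by
    intro i; rw [Finset.sum_boole]; exact hdeg i
  have hcol : ∀ j : Fin n, ∑ i : Fin n, (if G.Adj i j then (1:ℝ) else 0) = (k : ℝ) := by
    intro j
    have : ∀ i : Fin n, (if G.Adj i j then (1:ℝ) else 0) = (if G.Adj j i then (1:ℝ) else 0) := by
      intro i; simp [G.adj_comm]
    rw [Finset.sum_congr rfl fun i _ => this i]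
    exact hrow j
  -- quadratic form pieces
  have hxAx : ∑ i : Fin n, ∑ j : Fin n, (if G.Adj i j then x i * x j else 0) = 0 := by
    refine Finset.sum_eq_zero fun i _ => Finset.sum_eq_zero fun j _ => ?_
    by_cases h : G.Adj i j
    · rw [if_pos h]
      by_cases h1 : C i = c'
      · by_cases h2 : C j = c'
        · exact absurd (h1.trans h2.symm) (C.valid h)
        · simp [hxdef, h2]
      · simp [hxdef, h1]
    · rw [if_neg h]
  have hxA1 : ∑ i : Fin n, ∑ j : Fin n, (if G.Adj i j then x i else 0) = (k:ℝ) * α := by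
    have : ∀ i : Fin n, ∑ j : Fin n, (if G.Adj i j then x i else 0) = x i * k := by
      intro i
      have : ∀ j : Fin n, (if G.Adj i j then x i else 0) = x i * (if G.Adj i j then (1:ℝ) else 0) := by
        intro j; by_cases h : G.Adj i j <;> simp [h]
      rw [Finset.sum_congr rfl fun j _ => this j, ← Finset.mul_sum, hrow i]
    rw [Finset.sum_congr rfl fun i _ => this i]
    rw [← Finset.sum_mul, hsumx]; ring
  have h1Ax : ∑ i : Fin n, ∑ j : Fin n, (if G.Adj i j then x j else 0) = (k:ℝ) * α := by
    rw [Finset.sum_comm]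
    have : ∀ j : Fin n, ∑ i : Fin n, (if G.Adj i j then x j else 0) = x j * k := by
      intro j
      have : ∀ i : Fin n, (if G.Adj i j then x j else 0) = x j * (if G.Adj i j then (1:ℝ) else 0) := by
        intro i; by_cases h : G.Adj i j <;> simp [h]
      rw [Finset.sum_congr rfl fun i _ => this i, ← Finset.mul_sum, hcol j]
    rw [Finset.sum_congr rfl fun j _ => this j]
    rw [← Finset.sum_mul, hsumx]; ring
  have h1A1 : ∑ i : Fin n, ∑ j : Fin n, (if G.Adj i j then (1:ℝ) else 0) = (k:ℝ) * n := by
    rw [Finset.sum_congr rfl fun i _ => hrow i]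
    simp [Finset.sum_const, mul_comm]
  -- quadratic form of A at z
  have hquadA : z ⬝ᵥ (A *ᵥ z) = -2*cst*((k:ℝ)*α) + cst^2*((k:ℝ)*n) := by
    rw [hAdef, SimpleGraph.dotProduct_mulVec_adjMatrix]
    have expand : ∀ i j : Fin n, (if G.Adj i j then z i * z j else 0)
        = (if G.Adj i j then x i * x j else 0) - cst * (if G.Adj i j then x i else 0)
          - cst * (if G.Adj i j then x j else 0) + cst^2 * (if G.Adj i j then (1:ℝ) else 0) := by
      intro i j; by_cases h : G.Adj i j <;> simp [h, hzdef] <;> ring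
    calc ∑ i : Fin n, ∑ j : Fin n, (if G.Adj i j then z i * z j else 0)
        = ∑ i : Fin n, ∑ j : Fin n, ((if G.Adj i j then x i * x j else 0)
            - cst * (if G.Adj i j then x i else 0)
            - cst * (if G.Adj i j then x j else 0)
            + cst^2 * (if G.Adj i j then (1:ℝ) else 0)) := by
          exact Finset.sum_congr rfl fun i _ => Finset.sum_congr rfl fun j _ => expand i j
      _ = (∑ i : Fin n, ∑ j : Fin n, (if G.Adj i j then x i * x j else 0))
            - cst * (∑ i : Fin n, ∑ j : Fin n, (if G.Adj i j then x i else 0))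
            - cst * (∑ i : Fin n, ∑ j : Fin n, (if G.Adj i j then x j else 0))
            + cst^2 * (∑ i : Fin n, ∑ j : Fin n, (if G.Adj i j then (1:ℝ) else 0)) := by
          simp only [Finset.sum_sub_distrib, Finset.sum_add_distrib, ← Finset.mul_sum]
      _ = -2*cst*((k:ℝ)*α) + cst^2*((k:ℝ)*n) := by
          rw [hxAx, hxA1, h1Ax, h1A1]; ring
  have hzz : z ⬝ᵥ z = (α:ℝ) - 2*cst*α + (n:ℝ)*cst^2 := by
    have hxsq : ∑ w : Fin n, x w * x w = (α : ℝ) := by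
      have : ∀ w : Fin n, x w * x w = x w := by
        intro w; by_cases h : C w = c' <;> simp [hxdef, h]
      rw [Finset.sum_congr rfl fun w _ => this w, hsumx]
    unfold dotProduct
    have : ∀ w : Fin n, z w * z w = x w * x w - 2 * cst * x w + cst^2 := by
      intro w; rw [hzdef]; ring
    rw [Finset.sum_congr rfl fun w _ => this w]
    rw [Finset.sum_add_distrib, Finset.sum_sub_distrib, hxsq, ← Finset.mul_sum, hsumx,
      Finset.sum_const, Finset.card_univ, Fintype.card_fin, nsmul_eq_mul]
  -- the quadratic form of B vanishes at z
  have hq0 : star z ⬝ᵥ (B *ᵥ z) = 0 := by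
    rw [star_trivial, hBdef, Matrix.add_mulVec, dotProduct_add,
      Algebra.algebraMap_eq_smul_one, smul_mulVec, one_mulVec,
      dotProduct_smul, hquadA, hzz]
    have hcstn : cst * n = (α:ℝ) := by rw [hcst]; field_simp
    have : τ * ((α:ℝ) - 2*cst*α + (n:ℝ)*cst^2) + (-2*cst*((k:ℝ)*α) + cst^2*((k:ℝ)*n))
        = cst * ((n:ℝ)*τ - ((k:ℝ)+τ)*α) + (cst * n - α) * (τ * cst + cst * k - τ) := by
      ring
    rw [smul_eq_mul, this, hkey, hcstn]
    ring
  have hBz : B *ᵥ z = 0 := (hPSD.dotProduct_mulVec_zero_iff z).mp hq0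
  -- evaluate at v
  have hv' : (B *ᵥ z) v = 0 := by rw [hBz]; rfl
  rw [hBdef, Matrix.add_mulVec, Algebra.algebraMap_eq_smul_one, smul_mulVec, one_mulVec,
    Pi.add_apply, Pi.smul_apply, smul_eq_mul] at hv'
  have hAzv : (A *ᵥ z) v
      = ((Finset.univ.filter fun w => C w = c' ∧ G.Adj v w).card : ℝ) - cst * k := by
    rw [hAdef, SimpleGraph.adjMatrix_mulVec_apply]
    have : ∀ u : Fin n, z u = x u - cst := fun u => rfl
    rw [Finset.sum_congr rfl fun u _ => this u, Finset.sum_sub_distrib, Finset.sum_const,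
      nsmul_eq_mul]
    have hcard : ((G.neighborFinset v).card : ℝ) = (k:ℝ) := by
      exact_mod_cast congrArg Nat.cast (hreg v)
    have hsum : ∑ u ∈ G.neighborFinset v, x u
        = ((Finset.univ.filter fun w => C w = c' ∧ G.Adj v w).card : ℝ) := by
      rw [hxdef]
      rw [Finset.sum_boole]
      congr 1
      congr 1
      ext w
      simp [neighborFinset_eq_filter, and_comm]
    rw [hcard, hsum]
    ring
  have hzv : z v = -cst := by
    have : x v = 0 := by
      rw [hxdef]
      simp only
      rw [if_neg]
      rw [hv]; exact hcc
    rw [hzdef]; simp [this]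
  rw [hAzv, hzv] at hv'
  -- τ * (-cst) + (D - cst * k) = 0  ⇒ D = cst*(k+τ) = τ
  have hcstval : cst * ((k:ℝ) + τ) = τ := by
    rw [hcst]
    field_simp
    linarith [hkey]
  nlinarith [hv', hcstval]
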